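/- The finite abelian group Z/g1 × Z/g2 × Z/g3, where g1 = gcd(2n, r, k, d), g2 = gcd(r^2, kr, rd, 2nd - k^2)/g1, g3 = dr^2/(g1 g2), is cyclic if and only if gcd(r, 2nd - k^2) = 1. -/

import Mathlib

/-- The group Z/g1 × Z/g2 × Z/g3, with g1 = gcd(2n,r,k,d),
g2 = gcd(r²,kr,rd,2nd-k²)/g1, g3 = d*r²/(g1*g2), is cyclic iff gcd(r, 2nd-k²) = 1. -/
theorem stmt_2 (n k r d : ℤ) (hr : 0 < r) (hd : 0 < d)
    (g1 g2 g3 : ℕ)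
    (hg1 : g1 = Int.gcd (2*n) (Int.gcd r (Int.gcd k d)))
    (hg2 : g2 = Int.gcd (r^2) (Int.gcd (k*r) (Int.gcd (r*d) (2*n*d - k^2))) / g1)
    (hg3 : g3 = (d * r^2).toNat / (g1 * g2)) :
    IsAddCyclic (ZMod g1 × ZMod g2 × ZMod g3) ↔ Int.gcd r (2*n*d - k^2) = 1 := by
  set m : ℤ := 2*n*d - k^2 with hm
  set G : ℕ := Int.gcd (r^2) (Int.gcd (k*r) (Int.gcd (r*d) m)) with hG
  -- divisibility facts for g1
  have h1r : (g1:ℤ) ∣ r := hg1 ▸ (Int.gcd_dvd_right _ _).trans (Int.gcd_dvd_left _ _)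
  have h1k : (g1:ℤ) ∣ k := hg1 ▸ ((Int.gcd_dvd_right _ _).trans (Int.gcd_dvd_right _ _)).trans (Int.gcd_dvd_left _ _)
  have h1d : (g1:ℤ) ∣ d := hg1 ▸ ((Int.gcd_dvd_right _ _).trans (Int.gcd_dvd_right _ _)).trans (Int.gcd_dvd_right _ _)
  have h1n : (g1:ℤ) ∣ 2*n := hg1 ▸ (Int.gcd_dvd_left _ _)
  have h1m : (g1:ℤ) ∣ m := by
    have h1 : (g1:ℤ) ∣ 2*n*d := Dvd.dvd.mul_right h1n d
    have h2 : (g1:ℤ) ∣ k^2 := by rw [sq]; exact Dvd.dvd.mul_right h1k k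
    exact dvd_sub h1 h2
  -- facts for G
  have hGr2 : (G:ℤ) ∣ r^2 := (Int.gcd_dvd_left _ _)
  have hGrd : (G:ℤ) ∣ r*d := ((Int.gcd_dvd_right _ _).trans (Int.gcd_dvd_right _ _)).trans (Int.gcd_dvd_left _ _)
  have hGm : (G:ℤ) ∣ m := ((Int.gcd_dvd_right _ _).trans (Int.gcd_dvd_right _ _)).trans (Int.gcd_dvd_right _ _)
  -- g1 ∣ G
  have h1G : g1 ∣ G := by
    rw [← Int.natCast_dvd_natCast]
    push_cast
    refine Int.dvd_coe_gcd (by rw [sq]; exact Dvd.dvd.mul_right h1r r)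
      (Int.dvd_coe_gcd (Dvd.dvd.mul_right h1k r) (Int.dvd_coe_gcd (Dvd.dvd.mul_right h1r d) h1m))
  have hg1pos : 0 < g1 := by
    rcases Nat.eq_zero_or_pos g1 with h | h
    · exfalso; rw [h] at h1r; simp at h1r; omega
    · exact h
  have hGpos : 0 < G := by
    rcases Nat.eq_zero_or_pos G with h | h
    · exfalso; rw [h] at hGr2; simp at hGr2
      rcases hGr2 with h' | h' <;> omega
    · exact h
  have h12G : g1 * g2 = G := by
    rw [hg2]; exact Nat.mul_div_cancel' h1G
  have hg2pos : 0 < g2 := by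
    rcases Nat.eq_zero_or_pos g2 with h | h
    · exfalso; rw [h, mul_zero] at h12G; omega
    · exact h
  -- N = (d*r^2).toNat
  set N : ℕ := (d * r^2).toNat with hN
  have hNcast : (N:ℤ) = d * r^2 := Int.toNat_of_nonneg (by positivity)
  have hNpos : 0 < N := by
    have : (0:ℤ) < d * r^2 := by positivity
    omega
  have hGN : G ∣ N := by
    rw [← Int.natCast_dvd_natCast, hNcast]
    have h1 : (G:ℤ) ∣ (r*d)*r := Dvd.dvd.mul_right hGrd r
    convert h1 using 1; ring
  have hg3' : g3 = N / G := by rw [hg3, h12G]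
  have hg3pos : 0 < g3 := by
    rw [hg3']
    exact Nat.div_pos (Nat.le_of_dvd hNpos hGN) hGpos
  -- reduce cyclicity to lcm = product
  haveI : NeZero g1 := ⟨hg1pos.ne'⟩
  haveI : NeZero g2 := ⟨hg2pos.ne'⟩
  haveI : NeZero g3 := ⟨hg3pos.ne'⟩
  have hcyc : IsAddCyclic (ZMod g1 × ZMod g2 × ZMod g3) ↔
      Nat.lcm g1 (Nat.lcm g2 g3) = g1 * (g2 * g3) := by
    rw [IsAddCyclic.iff_exponent_eq_card, AddMonoid.exponent_prod, AddMonoid.exponent_prod,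
      ZMod.exponent, ZMod.exponent, ZMod.exponent, Nat.card_prod, Nat.card_prod,
      Nat.card_zmod, Nat.card_zmod, Nat.card_zmod, lcm_eq_nat_lcm, lcm_eq_nat_lcm]
  rw [hcyc]
  constructor
  · -- lcm = prod → gcd(r,m) = 1
    intro hl
    by_contra hne
    obtain ⟨p, hp, hpdvd⟩ := Nat.exists_prime_and_dvd hne
    have hpr : (p:ℤ) ∣ r := dvd_trans (Int.natCast_dvd_natCast.mpr hpdvd) (Int.gcd_dvd_left _ _)
    have hpm : (p:ℤ) ∣ m := dvd_trans (Int.natCast_dvd_natCast.mpr hpdvd) (Int.gcd_dvd_right _ _)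
    -- p ∣ G
    have hpG : p ∣ G := by
      rw [← Int.natCast_dvd_natCast]
      push_cast
      exact Int.dvd_coe_gcd (by rw [sq]; exact Dvd.dvd.mul_right hpr r)
        (Int.dvd_coe_gcd (Dvd.dvd.mul_left hpr k)
          (Int.dvd_coe_gcd (Dvd.dvd.mul_right hpr d) hpm))
    -- p ∣ g3
    have hpg3 : p ∣ g3 := by
      rw [hg3', Nat.dvd_div_iff_mul_dvd hGN, ← Int.natCast_dvd_natCast, hNcast]
      push_cast
      have h1 : (G:ℤ) * p ∣ (r*d) * r := mul_dvd_mul hGrd hpr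
      have he : (r*d)*r = d * r^2 := by ring
      rwa [he] at h1
    -- derive contradiction
    have hdvd1 : Nat.lcm (g1*g2) g3 ∣ g1 * (g2 * g3) := by
      rw [← mul_assoc]
      exact Nat.lcm_dvd (Dvd.intro g3 rfl) (Dvd.intro_left (g1*g2) rfl)
    have hdvd2 : g1 * (g2 * g3) ∣ Nat.lcm (g1*g2) g3 := by
      rw [← hl]
      refine Nat.lcm_dvd ((Dvd.intro g2 rfl).trans (Nat.dvd_lcm_left _ _))
        (Nat.lcm_dvd ((Dvd.intro_left g1 rfl).trans (Nat.dvd_lcm_left _ _))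
          (Nat.dvd_lcm_right _ _))
    have hle : Nat.lcm (g1*g2) g3 = (g1*g2) * g3 := by
      rw [mul_assoc]; exact Nat.dvd_antisymm hdvd1 hdvd2
    have hgcd1 : Nat.gcd (g1*g2) g3 = 1 := by
      have h := Nat.gcd_mul_lcm (g1*g2) g3
      rw [hle] at h
      have hpos : 0 < (g1*g2)*g3 := by positivity
      have h' : Nat.gcd (g1*g2) g3 * ((g1*g2)*g3) = 1 * ((g1*g2)*g3) := by
        rw [one_mul, h]
      exact Nat.eq_of_mul_eq_mul_right hpos h'
    have hp1 : p ∣ 1 := hgcd1 ▸ Nat.dvd_gcd (h12G ▸ hpG) hpg3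
    exact hp.one_lt.ne' (Nat.dvd_one.mp hp1)
  · -- gcd(r,m) = 1 → lcm = prod
    intro hco
    have hg1One : g1 = 1 := by
      have h1 : (g1:ℤ) ∣ Int.gcd r m := Int.dvd_coe_gcd h1r h1m
      rw [hco] at h1
      have h2 : (g1:ℤ) ≤ 1 := Int.le_of_dvd one_pos (by exact_mod_cast h1)
      omega
    have hGOne : G = 1 := by
      have hcop : IsCoprime r m := Int.isCoprime_iff_gcd_eq_one.mpr hco
      have hcop2 : IsCoprime (r^2) m := IsCoprime.pow_left hcop
      have h1 : (G:ℤ) ∣ Int.gcd (r^2) m := Int.dvd_coe_gcd hGr2 hGm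
      rw [Int.isCoprime_iff_gcd_eq_one.mp hcop2] at h1
      have h2 : (G:ℤ) ≤ 1 := Int.le_of_dvd one_pos (by exact_mod_cast h1)
      omega
    have hg2One : g2 = 1 := by
      have h := h12G
      rw [hg1One, one_mul] at h
      rw [h, hGOne]
    rw [hg1One, hg2One]
    simp [Nat.lcm]
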